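/- If m is a positive integer divisible by 4, then POS(ID_m, AN_m) = m²/4. -/

import Mathlib

open Finset

/-- Earth mover's distance between two vectors in ℝ^m: the ℓ1-distance
between their prefix-sum vectors. -/
noncomputable def emd {m : ℕ} (x y : Fin m → ℝ) : ℝ :=
  ∑ k : Fin m, |(∑ i ∈ Finset.Iic k, x i) - (∑ i ∈ Finset.Iic k, y i)|

/-- The positionwise distance between two m×m matrices: the minimum over
permutations σ of the sum of EMD distances between matched columns. -/
noncomputable def POS {m : ℕ} (X Y : Matrix (Fin m) (Fin m) ℝ) : ℝ :=
  Finset.univ.inf' Finset.univ_nonempty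
    (fun σ : Equiv.Perm (Fin m) => ∑ j : Fin m, emd (fun i => X i j) (fun i => Y i (σ j)))

/-- A matrix is bistochastic (a frequency matrix) if its entries are
nonnegative and every row and every column sums to 1. -/
def Bistochastic {m : ℕ} (X : Matrix (Fin m) (Fin m) ℝ) : Prop :=
  (∀ i j, 0 ≤ X i j) ∧ (∀ i, ∑ j, X i j = 1) ∧ (∀ j, ∑ i, X i j = 1)

/-- The identity frequency matrix ID_m. -/
noncomputable def IDmat (m : ℕ) : Matrix (Fin m) (Fin m) ℝ :=
  fun i j => if i = j then 1 else 0

/-- The uniformity frequency matrix UN_m. -/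
noncomputable def UNmat (m : ℕ) : Matrix (Fin m) (Fin m) ℝ :=
  fun _ _ => 1 / m

/-- The antagonism frequency matrix AN_m = (ID_m + rID_m)/2: entries 1/2 at
positions (i,i) and (i, m+1-i) (1-indexed), i.e. (i,j) with i+j+1 = m in
0-indexed terms. -/
noncomputable def ANmat (m : ℕ) : Matrix (Fin m) (Fin m) ℝ :=
  fun i j => ((if i = j then 1 else 0) + (if (i : ℕ) + (j : ℕ) + 1 = m then 1 else 0)) / 2

/-- The stratification frequency matrix ST_m: block-diagonal with two
(m/2)×(m/2) blocks of entries 2/m. -/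
noncomputable def STmat (m : ℕ) : Matrix (Fin m) (Fin m) ℝ :=
  fun i j => if (((i : ℕ) < m / 2) ↔ ((j : ℕ) < m / 2)) then 2 / m else 0

lemma chi_sum (m n : ℕ) (hn : n ≤ m) :
    ∑ k : Fin m, (if n ≤ (k : ℕ) then (1:ℝ) else 0) = ((m - n : ℕ) : ℝ) := by
  rw [Fin.sum_univ_eq_sum_range (fun k => if n ≤ k then (1:ℝ) else 0)]
  rw [Finset.range_eq_Ico, ← Finset.sum_Ico_consecutive _ (Nat.zero_le n) hn]
  have h1 : ∑ k ∈ Finset.Ico 0 n, (if n ≤ k then (1:ℝ) else 0) = 0 := by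
    apply Finset.sum_eq_zero; intro k hk
    simp only [Finset.mem_Ico] at hk
    rw [if_neg (by omega)]
  have h2 : ∑ k ∈ Finset.Ico n m, (if n ≤ k then (1:ℝ) else 0) = ((m - n : ℕ) : ℝ) := by
    rw [show (∑ k ∈ Finset.Ico n m, (if n ≤ k then (1:ℝ) else 0))
        = ∑ k ∈ Finset.Ico n m, (1:ℝ) from Finset.sum_congr rfl (fun k hk => by
          simp only [Finset.mem_Ico] at hk; rw [if_pos hk.1])]
    rw [Finset.sum_const, Nat.card_Ico]
    simp
  rw [h1, h2, zero_add]

lemma prefix_id {m : ℕ} (j k : Fin m) :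
    ∑ i ∈ Finset.Iic k, IDmat m i j = if (j:ℕ) ≤ (k:ℕ) then (1:ℝ) else 0 := by
  unfold IDmat
  rw [Finset.sum_ite_eq' (Finset.Iic k) j (fun _ => (1:ℝ))]
  simp only [Finset.mem_Iic, Fin.le_def]

lemma prefix_an {m : ℕ} (a k : Fin m) :
    ∑ i ∈ Finset.Iic k, ANmat m i a =
      ((if (a:ℕ) ≤ (k:ℕ) then (1:ℝ) else 0)
        + (if m - 1 - (a:ℕ) ≤ (k:ℕ) then (1:ℝ) else 0)) / 2 := by
  unfold ANmat
  have hb : m - 1 - (a:ℕ) < m := by omega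
  have hcond : ∀ i : Fin m, ((i:ℕ) + (a:ℕ) + 1 = m) ↔ (i = (⟨m - 1 - (a:ℕ), hb⟩ : Fin m)) := by
    intro i
    rw [Fin.ext_iff]
    simp only [Fin.val_mk]
    omega
  rw [← Finset.sum_div]
  congr 1
  rw [Finset.sum_add_distrib]
  congr 1
  · rw [Finset.sum_ite_eq' (Finset.Iic k) a (fun _ => (1:ℝ))]
    simp only [Finset.mem_Iic, Fin.le_def]
  · rw [show (∑ i ∈ Finset.Iic k, if (i:ℕ) + (a:ℕ) + 1 = m then (1:ℝ) else 0)
        = ∑ i ∈ Finset.Iic k, if i = (⟨m - 1 - (a:ℕ), hb⟩ : Fin m) then (1:ℝ) else 0 from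
      Finset.sum_congr rfl (fun i _ => if_congr (hcond i) rfl rfl)]
    rw [Finset.sum_ite_eq' (Finset.Iic k) _ (fun _ => (1:ℝ))]
    simp only [Finset.mem_Iic, Fin.le_def, Fin.val_mk]

noncomputable def gval (m : ℕ) (a : Fin m) : ℝ :=
  ((max (a:ℕ) (m - 1 - (a:ℕ)) - min (a:ℕ) (m - 1 - (a:ℕ)) : ℕ) : ℝ) / 2

lemma sum_chi_diff (m lo hi : ℕ) (h1 : lo ≤ hi) (h2 : hi ≤ m) :
    ∑ k : Fin m, ((if lo ≤ (k:ℕ) then (1:ℝ) else 0) - (if hi ≤ (k:ℕ) then (1:ℝ) else 0)) / 2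
      = ((hi - lo : ℕ) : ℝ) / 2 := by
  rw [← Finset.sum_div, Finset.sum_sub_distrib, chi_sum m lo (le_trans h1 h2), chi_sum m hi h2]
  rw [Nat.cast_sub h1, Nat.cast_sub h2, Nat.cast_sub (le_trans h1 h2)]
  ring

lemma emd_expand {m : ℕ} (j a : Fin m) :
    emd (fun i => IDmat m i j) (fun i => ANmat m i a)
      = ∑ k : Fin m, |(if (j:ℕ) ≤ (k:ℕ) then (1:ℝ) else 0)
          - ((if (a:ℕ) ≤ (k:ℕ) then (1:ℝ) else 0)
            + (if m - 1 - (a:ℕ) ≤ (k:ℕ) then (1:ℝ) else 0)) / 2| := by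
  unfold emd
  exact Finset.sum_congr rfl (fun k _ => by rw [prefix_id j k, prefix_an a k])

lemma gval_eq_sum {m : ℕ} (a : Fin m) :
    gval m a = ∑ k : Fin m, ((if min (a:ℕ) (m-1-(a:ℕ)) ≤ (k:ℕ) then (1:ℝ) else 0)
      - (if max (a:ℕ) (m-1-(a:ℕ)) ≤ (k:ℕ) then (1:ℝ) else 0)) / 2 := by
  have ha := a.isLt
  rw [sum_chi_diff m _ _ (min_le_max) (by omega)]
  unfold gval
  rfl

lemma emd_ge {m : ℕ} (j a : Fin m) :
    gval m a ≤ emd (fun i => IDmat m i j) (fun i => ANmat m i a) := by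
  rw [emd_expand, gval_eq_sum]
  have ha := a.isLt
  rcases le_total (a:ℕ) (m - 1 - (a:ℕ)) with h | h
  · simp only [min_eq_left h, max_eq_right h]
    apply Finset.sum_le_sum
    intro k _
    split_ifs <;> first | (norm_num [abs_of_nonpos, abs_of_nonneg]; done) | (exfalso; omega)
  · simp only [min_eq_right h, max_eq_left h]
    apply Finset.sum_le_sum
    intro k _
    split_ifs <;> first | (norm_num [abs_of_nonpos, abs_of_nonneg]; done) | (exfalso; omega)

lemma emd_self {m : ℕ} (j : Fin m) :
    emd (fun i => IDmat m i j) (fun i => ANmat m i j) = gval m j := by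
  rw [emd_expand, gval_eq_sum]
  have hj := j.isLt
  rcases le_total (j:ℕ) (m - 1 - (j:ℕ)) with h | h
  · simp only [min_eq_left h, max_eq_right h]
    apply Finset.sum_congr rfl
    intro k _
    split_ifs <;> first | (norm_num [abs_of_nonpos, abs_of_nonneg]; done) | (exfalso; omega)
  · simp only [min_eq_right h, max_eq_left h]
    apply Finset.sum_congr rfl
    intro k _
    split_ifs <;> first | (norm_num [abs_of_nonpos, abs_of_nonneg]; done) | (exfalso; omega)

lemma odd_sum (t : ℕ) : ∑ i ∈ Finset.range t, (2 * i + 1) = t ^ 2 := by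
  induction t with
  | zero => simp
  | succ n ih => rw [Finset.sum_range_succ, ih]; ring

lemma nat_sum (t : ℕ) :
    ∑ a ∈ Finset.range (2 * t), (max a (2 * t - 1 - a) - min a (2 * t - 1 - a))
      = 2 * t ^ 2 := by
  rw [Finset.range_eq_Ico, ← Finset.sum_Ico_consecutive _ (Nat.zero_le t) (by omega)]
  have h1 : ∑ a ∈ Finset.Ico 0 t, (max a (2 * t - 1 - a) - min a (2 * t - 1 - a))
      = t ^ 2 := by
    rw [show Finset.Ico 0 t = Finset.range t from (Finset.range_eq_Ico t).symm]
    rw [show (∑ a ∈ Finset.range t, (max a (2 * t - 1 - a) - min a (2 * t - 1 - a)))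
        = ∑ a ∈ Finset.range t, (2 * (t - 1 - a) + 1) from Finset.sum_congr rfl
          (fun a ha => by simp only [Finset.mem_range] at ha; omega)]
    rw [Finset.sum_range_reflect (fun i => 2 * i + 1) t, odd_sum]
  have h2 : ∑ a ∈ Finset.Ico t (2 * t), (max a (2 * t - 1 - a) - min a (2 * t - 1 - a))
      = t ^ 2 := by
    rw [Finset.sum_Ico_eq_sum_range]
    rw [show (∑ i ∈ Finset.range (2 * t - t),
          (max (t + i) (2 * t - 1 - (t + i)) - min (t + i) (2 * t - 1 - (t + i))))
        = ∑ i ∈ Finset.range t, (2 * i + 1) from by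
      rw [show 2 * t - t = t from by omega]
      exact Finset.sum_congr rfl (fun i hi => by simp only [Finset.mem_range] at hi; omega)]
    rw [odd_sum]
  rw [h1, h2]
  ring

lemma sum_gval (m t : ℕ) (h : m = 2 * t) :
    ∑ a : Fin m, gval m a = (m : ℝ) ^ 2 / 4 := by
  unfold gval
  rw [← Finset.sum_div, ← Nat.cast_sum]
  rw [Fin.sum_univ_eq_sum_range (fun a => (max a (m - 1 - a) - min a (m - 1 - a)))]
  subst h
  rw [nat_sum t]
  push_cast
  ring

theorem pos_ID_AN (m : ℕ) (hm : 0 < m) (h4 : 4 ∣ m) :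
    POS (IDmat m) (ANmat m) = (m : ℝ) ^ 2 / 4 := by
  obtain ⟨q, hq⟩ := h4
  have ht : m = 2 * (2 * q) := by omega
  unfold POS
  apply le_antisymm
  · apply le_trans (Finset.inf'_le _ (Finset.mem_univ (1 : Equiv.Perm (Fin m))))
    apply le_of_eq
    rw [show (∑ j : Fin m, emd (fun i => IDmat m i j) (fun i => ANmat m i ((1 : Equiv.Perm (Fin m)) j)))
        = ∑ j : Fin m, gval m j from Finset.sum_congr rfl (fun j _ => by
          rw [Equiv.Perm.one_apply]; exact emd_self j)]
    exact sum_gval m (2 * q) ht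
  · apply Finset.le_inf'
    intro σ _
    calc (m : ℝ) ^ 2 / 4 = ∑ a : Fin m, gval m a := (sum_gval m (2 * q) ht).symm
      _ = ∑ j : Fin m, gval m (σ j) := (Equiv.sum_comp σ (gval m)).symm
      _ ≤ ∑ j : Fin m, emd (fun i => IDmat m i j) (fun i => ANmat m i (σ j)) :=
          Finset.sum_le_sum (fun j _ => emd_ge j (σ j))
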